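/- Let K be a field of characteristic zero and n ≥ 2. Let D̃ be an n-graded K-derivation of K[x,y] that maps the subalgebra K[x^n, x^{n−1}y, …, x y^{n−1}, y^n] into itself. If the restriction of D̃ to K[x^n, x^{n−1}y, …, x y^{n−1}, y^n] is locally nilpotent, then D̃ is a locally nilpotent derivation of K[x,y]. -/

import Mathlib

open MvPolynomial

/-- The `i`-th piece (`i ∈ ℤ/nℤ`) of the `n`-grading of `K[x,y]`. -/
noncomputable def gradedPiece (K : Type*) [Field K] (n : ℕ) (i : ZMod n) :
    Submodule K (MvPolynomial (Fin 2) K) :=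
  Submodule.span K {m | ∃ a b : ℕ, ((a + b : ℕ) : ZMod n) = i ∧ m = X 0 ^ a * X 1 ^ b}

/-- The Veronese subalgebra `K[xⁿ, xⁿ⁻¹y, …, xyⁿ⁻¹, yⁿ]` of `K[x,y]`. -/
noncomputable def veronese (K : Type*) [Field K] (n : ℕ) :
    Subalgebra K (MvPolynomial (Fin 2) K) :=
  Algebra.adjoin K {m | ∃ i ≤ n, m = X 0 ^ (n - i) * X 1 ^ i}

set_option linter.unusedSectionVars false

namespace Stmt5

set_option linter.unusedSectionVars false

variable {K : Type*} [Field K] [CharZero K]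

local notation "B" => MvPolynomial (Fin 2) K

variable (D : Derivation K (MvPolynomial (Fin 2) K) (MvPolynomial (Fin 2) K))

lemma iter_zero (k : ℕ) : (⇑D)^[k] (0 : B) = 0 := by
  induction k with
  | zero => rfl
  | succ k ih => rw [Function.iterate_succ_apply, map_zero, ih]

lemma iter_add (k : ℕ) (f g : B) :
    (⇑D)^[k] (f + g) = (⇑D)^[k] f + (⇑D)^[k] g := by
  induction k generalizing f g with
  | zero => rfl
  | succ k ih => rw [Function.iterate_succ_apply, map_add, ih, Function.iterate_succ_apply,
      Function.iterate_succ_apply]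

lemma iter_vanish {f : B} {k : ℕ} (h : (⇑D)^[k] f = 0) {l : ℕ} (hl : k ≤ l) :
    (⇑D)^[l] f = 0 := by
  obtain ⟨j, rfl⟩ := Nat.exists_eq_add_of_le hl
  rw [add_comm, Function.iterate_add_apply, h, iter_zero]

/-- Iterated Leibniz under vanishing assumptions. -/
lemma iter_leibniz : ∀ (k : ℕ) (a b : ℕ) (f g : B), a + b = k →
    (⇑D)^[a+1] f = 0 → (⇑D)^[b+1] g = 0 →
    (⇑D)^[k] (f * g) = (k.choose a) • ((⇑D)^[a] f * (⇑D)^[b] g) := by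
  intro k
  induction k with
  | zero =>
    intro a b f g hab hf hg
    obtain ⟨rfl, rfl⟩ : a = 0 ∧ b = 0 := by omega
    simp
  | succ k ih =>
    intro a b f g hab hf hg
    rw [Function.iterate_succ_apply]
    have hD : D (f * g) = f * D g + (D f) * g := by
      rw [Derivation.leibniz]; simp [smul_eq_mul]; ring
    rw [hD, iter_add]
    rcases Nat.eq_zero_or_pos a with ha | ha
    · subst ha
      have hDf : D f = 0 := by simpa using hf
      have h1 : (⇑D)^[k] (f * D g) = (k.choose 0) • ((⇑D)^[0] f * (⇑D)^[k] (D g)) := by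
        apply ih 0 k f (D g) (by omega)
        · simpa using hf
        · rw [← Function.iterate_succ_apply]
          exact iter_vanish D hg (by omega)
      rw [h1, hDf, zero_mul, iter_zero, add_zero]
      obtain rfl : b = k + 1 := by omega
      simp [Function.iterate_succ_apply]
    · obtain ⟨a', rfl⟩ : ∃ a', a = a' + 1 := ⟨a - 1, by omega⟩
      have h2 : (⇑D)^[k] ((D f) * g) = (k.choose a') • ((⇑D)^[a'] (D f) * (⇑D)^[b] g) := by
        apply ih a' b (D f) g (by omega)
        · rw [← Function.iterate_succ_apply]; exact hf
        · exact hg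
      rw [h2, ← Function.iterate_succ_apply]
      rcases Nat.eq_zero_or_pos b with hb | hb
      · subst hb
        have hDg : D g = 0 := by simpa using hg
        rw [hDg, mul_zero, iter_zero, zero_add]
        obtain rfl : k = a' := by omega
        simp [Nat.choose_self]
      · obtain ⟨b', rfl⟩ : ∃ b', b = b' + 1 := ⟨b - 1, by omega⟩
        have h1 : (⇑D)^[k] (f * D g) = (k.choose (a'+1)) • ((⇑D)^[a'+1] f * (⇑D)^[b'] (D g)) := by
          apply ih (a'+1) b' f (D g) (by omega)
          · exact hf
          · rw [← Function.iterate_succ_apply]; exact hg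
        rw [h1, ← Function.iterate_succ_apply]
        rw [← add_smul]
        congr 1
        rw [Nat.choose_succ_succ, Nat.add_comm]

/-- `f` has `D`-degree exactly `a`. -/
def IsDeg (f : MvPolynomial (Fin 2) K) (a : ℕ) : Prop :=
  (⇑D)^[a] f ≠ 0 ∧ (⇑D)^[a+1] f = 0

lemma isDeg_unique {f : B} {a b : ℕ} (ha : IsDeg D f a) (hb : IsDeg D f b) : a = b := by
  by_contra h
  rcases Nat.lt_or_ge a b with hlt | hge
  · exact hb.1 (iter_vanish D ha.2 (by omega))
  · exact ha.1 (iter_vanish D hb.2 (by omega))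

lemma exists_isDeg {f : B} (hf : f ≠ 0) (h : ∃ m, (⇑D)^[m] f = 0) : ∃ a, IsDeg D f a := by
  classical
  let k := Nat.find h
  have hk : (⇑D)^[k] f = 0 := Nat.find_spec h
  have hk1 : 1 ≤ k := by
    rcases Nat.eq_zero_or_pos k with h0 | h1
    · exfalso; apply hf; simpa [h0] using hk
    · exact h1
  refine ⟨k - 1, ?_, ?_⟩
  · exact Nat.find_min h (by omega)
  · have : k - 1 + 1 = k := by omega
    rw [this]; exact hk

lemma isDeg_mul {f g : B} {a b : ℕ} (hf : IsDeg D f a) (hg : IsDeg D g b) :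
    IsDeg D (f * g) (a + b) := by
  constructor
  · rw [iter_leibniz D (a+b) a b f g rfl hf.2 hg.2]
    rw [nsmul_eq_mul]
    apply mul_ne_zero
    · exact_mod_cast Nat.cast_ne_zero.mpr (Nat.choose_pos (Nat.le_add_right a b) ).ne'
    · exact mul_ne_zero hf.1 hg.1
  · rw [iter_leibniz D (a+b+1) (a+1) b f g (by omega) (iter_vanish D hf.2 (by omega)) hg.2,
      hf.2, zero_mul, smul_zero]

lemma isDeg_pow {f : B} {a : ℕ} (hf : IsDeg D f a) (k : ℕ) :
    IsDeg D (f ^ k) (k * a) := by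
  induction k with
  | zero =>
    constructor
    · simpa using one_ne_zero
    · simpa using D.map_one_eq_zero
  | succ k ih =>
    have h2 := isDeg_mul D ih hf
    have : (k + 1) * a = k * a + a := by ring
    rw [pow_succ, this]
    exact h2

lemma isDeg_const_mul {f : B} {a : ℕ} (hf : IsDeg D f a) {c : ℕ} (hc : c ≠ 0) :
    IsDeg D ((c : B) * f) a := by
  have hcD : IsDeg D ((c : B)) 0 := by
    constructor
    · simpa using hc
    · simpa using D.map_natCast c
  simpa using isDeg_mul D hcD hf

lemma isDeg_deriv {f : B} {a : ℕ} (hDf : IsDeg D (D f) a) : IsDeg D f (a + 1) := by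
  constructor
  · rw [Function.iterate_succ_apply]; exact hDf.1
  · rw [Function.iterate_succ_apply]; exact hDf.2

lemma monomial_mem_piece {n : ℕ} {i : ZMod n} {a b : ℕ} (h : ((a + b : ℕ) : ZMod n) = i) :
    (X 0 : B) ^ a * X 1 ^ b ∈ gradedPiece K n i :=
  Submodule.subset_span ⟨a, b, h, rfl⟩

lemma piece_mul {n : ℕ} {i j : ZMod n} {f g : B}
    (hf : f ∈ gradedPiece K n i) (hg : g ∈ gradedPiece K n j) :
    f * g ∈ gradedPiece K n (i + j) := by
  have hle : gradedPiece K n i * gradedPiece K n j ≤ gradedPiece K n (i + j) := by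
    rw [gradedPiece, gradedPiece, Submodule.span_mul_span, Submodule.span_le]
    rintro m hm
    rw [Set.mem_mul] at hm
    obtain ⟨m1, ⟨a, b, hab, rfl⟩, m2, ⟨c, d, hcd, rfl⟩, rfl⟩ := hm
    apply Submodule.subset_span
    refine ⟨a + c, b + d, ?_, by ring⟩
    push_cast
    push_cast at hab hcd
    linear_combination hab + hcd
  exact hle (Submodule.mul_mem_mul hf hg)

lemma deriv_piece {n : ℕ}
    (hgr : D (X 0) ∈ gradedPiece K n 1 ∧ D (X 1) ∈ gradedPiece K n 1)
    {i : ZMod n} {f : B} (hf : f ∈ gradedPiece K n i) : D f ∈ gradedPiece K n i := by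
  induction hf using Submodule.span_induction with
  | mem m hm =>
    obtain ⟨a, b, hab, rfl⟩ := hm
    have hD : D ((X 0 : B) ^ a * X 1 ^ b)
        = a • (X 0 ^ (a-1) * X 1 ^ b * D (X 0)) + b • (X 0 ^ a * X 1 ^ (b-1) * D (X 1)) := by
      rw [Derivation.leibniz, Derivation.leibniz_pow, Derivation.leibniz_pow]
      simp only [smul_eq_mul, nsmul_eq_mul]
      ring
    rw [hD]
    apply Submodule.add_mem
    · rcases a with _ | a
      · simp
      · apply nsmul_mem
        have h1 : (X 0 : B) ^ (a + 1 - 1) * X 1 ^ b ∈ gradedPiece K n ((a + b : ℕ) : ZMod n) := by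
          apply monomial_mem_piece; norm_num
        have := piece_mul h1 hgr.1
        have heq : ((a + b : ℕ) : ZMod n) + 1 = i := by
          push_cast at hab ⊢
          linear_combination hab
        rwa [heq] at this
    · rcases b with _ | b
      · simp
      · apply nsmul_mem
        have h1 : (X 0 : B) ^ a * X 1 ^ (b + 1 - 1) ∈ gradedPiece K n ((a + b : ℕ) : ZMod n) := by
          apply monomial_mem_piece; norm_num
        have := piece_mul h1 hgr.2
        have heq : ((a + b : ℕ) : ZMod n) + 1 = i := by
          push_cast at hab ⊢
          linear_combination hab
        rwa [heq] at this
  | zero => simp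
  | add x y hx hy ihx ihy => rw [map_add]; exact Submodule.add_mem _ ihx ihy
  | smul c x hx ihx => rw [Derivation.map_smul]; exact Submodule.smul_mem _ _ ihx

lemma mono_mem_ver {n : ℕ} (hn : 0 < n) :
    ∀ (k a b : ℕ), a + b = n * k → (X 0 : B) ^ a * X 1 ^ b ∈ veronese K n := by
  intro k
  induction k with
  | zero =>
    intro a b hab
    obtain ⟨rfl, rfl⟩ : a = 0 ∧ b = 0 := by omega
    simpa using Subalgebra.one_mem _
  | succ k ih =>
    intro a b hab
    rw [Nat.mul_succ] at hab
    rcases le_or_gt n a with h | h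
    · have hg : (X 0 : B) ^ n ∈ veronese K n := by
        apply Algebra.subset_adjoin
        exact ⟨0, by omega, by simp⟩
      have hrest := ih (a - n) b (by omega)
      have heq : (X 0 : B) ^ n * ((X 0) ^ (a - n) * X 1 ^ b) = (X 0) ^ a * X 1 ^ b := by
        rw [← mul_assoc, ← pow_add, show n + (a - n) = a by omega]
      rw [← heq]
      exact Subalgebra.mul_mem _ hg hrest
    · have hba : n - a ≤ b := by omega
      have hg : (X 0 : B) ^ a * X 1 ^ (n - a) ∈ veronese K n := by
        apply Algebra.subset_adjoin
        exact ⟨n - a, by omega, by rw [show n - (n - a) = a by omega]⟩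
      have hrest := ih 0 (b - (n - a)) (by omega)
      have heq : ((X 0 : B) ^ a * X 1 ^ (n - a)) * ((X 0 : B) ^ 0 * X 1 ^ (b - (n - a)))
          = (X 0) ^ a * X 1 ^ b := by
        rw [pow_zero, one_mul, mul_assoc, ← pow_add, show (n - a) + (b - (n - a)) = b by omega]
      rw [← heq]
      exact Subalgebra.mul_mem _ hg hrest

lemma piece0_mem_ver {n : ℕ} (hn : 0 < n) {f : B}
    (hf : f ∈ gradedPiece K n 0) : f ∈ veronese K n := by
  induction hf using Submodule.span_induction with
  | mem m hm =>
    obtain ⟨a, b, hab, rfl⟩ := hm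
    obtain ⟨k, hk⟩ := (ZMod.natCast_eq_zero_iff (a + b) n).mp hab
    exact mono_mem_ver hn k a b hk
  | zero => exact Subalgebra.zero_mem _
  | add x y hx hy ihx ihy => exact Subalgebra.add_mem _ ihx ihy
  | smul c x hx ihx => exact Subalgebra.smul_mem _ ihx c

lemma pow_n_mem_ver {n : ℕ} (hn : 0 < n) {f : B}
    (hf : f ∈ gradedPiece K n 1) : f ^ n ∈ veronese K n := by
  apply piece0_mem_ver hn
  have : ∀ k : ℕ, f ^ k ∈ gradedPiece K n ((k : ZMod n) * 1) := by
    intro k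
    induction k with
    | zero =>
      have h1 : (1 : B) ∈ gradedPiece K n 0 := by
        simpa using monomial_mem_piece (K := K) (n := n) (i := 0) (a := 0) (b := 0) (by simp)
      simpa using h1
    | succ k ih =>
      have := piece_mul ih hf
      rw [pow_succ]
      convert this using 2
      push_cast
      ring
  have h := this n
  rwa [ZMod.natCast_self, zero_mul] at h

lemma key_step {n : ℕ} (hn : 2 ≤ n) {g : B} (hg : g ≠ 0) (hg' : D g ≠ 0)
    {a a' : ℕ} (hu : IsDeg D (g ^ n) a) (hu' : IsDeg D ((D g) ^ n) a') :
    a = a' + n := by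
  have hv : D (g ^ n) = (n : B) * (g ^ (n - 1) * D g) := by
    rw [Derivation.leibniz_pow]
    simp only [smul_eq_mul, nsmul_eq_mul]
  have hnB : (n : B) ≠ 0 := Nat.cast_ne_zero.mpr (by omega)
  have hvnz : D (g ^ n) ≠ 0 := by
    rw [hv]
    exact mul_ne_zero hnB (mul_ne_zero (pow_ne_zero _ hg) hg')
  obtain ⟨av, hdv⟩ : ∃ av, IsDeg D (D (g ^ n)) av := by
    apply exists_isDeg D hvnz
    exact ⟨a, by rw [← Function.iterate_succ_apply]; exact hu.2⟩
  have hau : a = av + 1 := isDeg_unique D hu (isDeg_deriv D hdv)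
  have heq : (D (g ^ n)) ^ n = ((n ^ n : ℕ) : B) * ((g ^ n) ^ (n - 1) * (D g) ^ n) := by
    rw [hv, mul_pow, mul_pow, ← pow_mul, ← pow_mul, Nat.mul_comm (n - 1) n, pow_mul]
    push_cast
    ring
  have hL : IsDeg D ((D (g ^ n)) ^ n) (n * av) := isDeg_pow D hdv n
  have hR : IsDeg D (((n ^ n : ℕ) : B) * ((g ^ n) ^ (n - 1) * (D g) ^ n))
      ((n - 1) * a + a') :=
    isDeg_const_mul D (isDeg_mul D (isDeg_pow D hu (n - 1)) hu') (Nat.pos_of_ne_zero (by positivity)).ne'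
  rw [heq] at hL
  have h8 : n * av = (n - 1) * a + a' := isDeg_unique D hL hR
  have hauZ : (a : ℤ) = (av : ℤ) + 1 := by exact_mod_cast hau
  have h8' : (n : ℤ) * av = ((n : ℤ) - 1) * a + a' := by
    zify [show 1 ≤ n by omega] at h8
    exact h8
  zify
  linear_combination h8' + (n : ℤ) * hauZ

lemma gen_nil {n : ℕ} (hn : 2 ≤ n)
    (hgr : D (X 0) ∈ gradedPiece K n 1 ∧ D (X 1) ∈ gradedPiece K n 1)
    (hln' : ∀ f ∈ veronese K n, ∃ m, (⇑D)^[m] f = 0)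
    {z : B} (hz : z ∈ gradedPiece K n 1) : ∃ m, (⇑D)^[m] z = 0 := by
  by_contra hcon
  push_neg at hcon
  set g : ℕ → B := fun m => (⇑D)^[m] z with hgdef
  have hgsucc : ∀ m, g (m + 1) = D (g m) := fun m => Function.iterate_succ_apply' _ _ _
  have hgm : ∀ m, g m ∈ gradedPiece K n 1 := by
    intro m
    induction m with
    | zero => exact hz
    | succ m ih => rw [hgsucc]; exact deriv_piece D hgr ih
  have hA : ∀ m, ∃ a, IsDeg D ((g m) ^ n) a := by
    intro m
    apply exists_isDeg D (pow_ne_zero _ (hcon m))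
    obtain ⟨m', hm'⟩ := hln' ((g m) ^ n) (pow_n_mem_ver (by omega) (hgm m))
    exact ⟨m', hm'⟩
  choose A hdeg using hA
  have step : ∀ m, A m = A (m + 1) + n := by
    intro m
    have h1 := hdeg m
    have h2 := hdeg (m + 1)
    rw [hgsucc] at h2
    exact key_step D hn (hcon m) (by rw [← hgsucc]; exact hcon (m + 1)) h1 h2
  have hdesc : ∀ m, A 0 = A m + m * n := by
    intro m
    induction m with
    | zero => simp
    | succ m ih => rw [ih, step m]; ring
  have h2 := hdesc (A 0 + 1)
  have h3 : (A 0 + 1) * 1 ≤ (A 0 + 1) * n := Nat.mul_le_mul_left _ (by omega)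
  omega

end Stmt5

/-- An `n`-graded derivation of `K[x,y]` preserving
`K[xⁿ, …, yⁿ]` whose restriction to `K[xⁿ, …, yⁿ]` is locally nilpotent is itself
locally nilpotent on `K[x,y]`. -/
theorem locally_nilpotent_of_restriction (K : Type*) [Field K] [CharZero K]
    (n : ℕ) (hn : 2 ≤ n)
    (D : Derivation K (MvPolynomial (Fin 2) K) (MvPolynomial (Fin 2) K))
    (hgr : D (X 0) ∈ gradedPiece K n 1 ∧ D (X 1) ∈ gradedPiece K n 1)
    (hmap : ∀ f ∈ veronese K n, D f ∈ veronese K n)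
    (hln : ∀ f ∈ veronese K n, ∃ m : ℕ, 0 < m ∧ (D.toLinearMap ^ m) f = 0) :
    ∀ f : MvPolynomial (Fin 2) K, ∃ m : ℕ, 0 < m ∧ (D.toLinearMap ^ m) f = 0 := by
  have hconv : ∀ (m : ℕ) (f : MvPolynomial (Fin 2) K),
      (D.toLinearMap ^ m) f = (⇑D)^[m] f := by
    intro m f
    rw [Module.End.pow_apply, Derivation.coeFn_coe]
  have hln' : ∀ f ∈ veronese K n, ∃ m, (⇑D)^[m] f = 0 := by
    intro f hf
    obtain ⟨m, _, hm⟩ := hln f hf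
    exact ⟨m, by rw [← hconv]; exact hm⟩
  have hx : ∃ m, (⇑D)^[m] (X 0 : MvPolynomial (Fin 2) K) = 0 := by
    apply Stmt5.gen_nil D hn hgr hln'
    simpa using Stmt5.monomial_mem_piece (K := K) (n := n) (i := 1) (a := 1) (b := 0) (by simp)
  have hy : ∃ m, (⇑D)^[m] (X 1 : MvPolynomial (Fin 2) K) = 0 := by
    apply Stmt5.gen_nil D hn hgr hln'
    simpa using Stmt5.monomial_mem_piece (K := K) (n := n) (i := 1) (a := 0) (b := 1) (by simp)
  have main : ∀ f : MvPolynomial (Fin 2) K, ∃ m, (⇑D)^[m] f = 0 := by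
    intro f
    induction f using MvPolynomial.induction_on with
    | C a =>
      refine ⟨1, ?_⟩
      have : (C a : MvPolynomial (Fin 2) K) = algebraMap K _ a := rfl
      simp [this, Derivation.map_algebraMap]
    | add p q hp hq =>
      obtain ⟨mp, hmp⟩ := hp
      obtain ⟨mq, hmq⟩ := hq
      refine ⟨max mp mq, ?_⟩
      rw [Stmt5.iter_add]
      rw [Stmt5.iter_vanish D hmp (le_max_left _ _), Stmt5.iter_vanish D hmq (le_max_right _ _),
        add_zero]
    | mul_X p i hp =>
      obtain ⟨mp, hmp⟩ := hp
      have hXi : ∃ mi, (⇑D)^[mi] (X i : MvPolynomial (Fin 2) K) = 0 := by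
        fin_cases i
        · exact hx
        · exact hy
      obtain ⟨mi, hmi⟩ := hXi
      refine ⟨mp + mi, ?_⟩
      rw [Stmt5.iter_leibniz D (mp + mi) mp mi p (X i) rfl
        (Stmt5.iter_vanish D hmp (by omega)) (Stmt5.iter_vanish D hmi (by omega)),
        hmp, zero_mul, smul_zero]
  intro f
  obtain ⟨m, hm⟩ := main f
  exact ⟨m + 1, by omega, by rw [hconv]; exact Stmt5.iter_vanish D hm (by omega)⟩
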